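/- Let T1 and T2 be two tournaments on the vertex set {1,...,n} (n ≥ 1). Then there exists a vertex μ such that for every vertex i, the relation i ⇒ μ holds, i.e., i = μ, or (i,μ) is an edge of T1, or (i,μ) is an edge of T2, or there exists a vertex k with (i,k) an edge of T1 and (k,μ) an edge of T2. -/
import Mathlib


/-- For any two tournaments `T1`, `T2` on `{1,…,n}` (n ≥ 1) there is a
vertex `μ` such that `i ⇒ μ` for every vertex `i`, where `i ⇒ j` means `i = j`,
or `(i,j) ∈ E1`, or `(i,j) ∈ E2`, or there is `k` with `(i,k) ∈ E1` and `(k,j) ∈ E2`. -/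
theorem exists_absorbed_vertex (n : ℕ) (hn : 1 ≤ n)
    (E1 E2 : Fin n → Fin n → Prop)
    (hT1irr : ∀ i, ¬ E1 i i)
    (hT1 : ∀ i j : Fin n, i ≠ j → (E1 i j ↔ ¬ E1 j i))
    (hT2irr : ∀ i, ¬ E2 i i)
    (hT2 : ∀ i j : Fin n, i ≠ j → (E2 i j ↔ ¬ E2 j i)) :
    ∃ μ : Fin n, ∀ i : Fin n,
      i = μ ∨ E1 i μ ∨ E2 i μ ∨ ∃ k : Fin n, E1 i k ∧ E2 k μ := by
  by_contra h
  push_neg at h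
  choose g hg using h
  -- For each μ, g μ is a vertex not reaching μ.
  have hne : ∀ μ, g μ ≠ μ := fun μ => (hg μ).1
  have hE1 : ∀ μ, E1 μ (g μ) := fun μ =>
    (hT1 μ (g μ) (Ne.symm (hne μ))).mpr (hg μ).2.1
  have hE2 : ∀ μ, E2 μ (g μ) := fun μ =>
    (hT2 μ (g μ) (Ne.symm (hne μ))).mpr (hg μ).2.2.1
  have hC : ∀ μ s, E2 s μ → E1 s (g μ) := by
    intro μ s hs
    by_cases hsg : s = g μ
    · exact absurd (hsg ▸ hs) (hg μ).2.2.1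
    · have : ¬ E1 (g μ) s := fun h1 => (hg μ).2.2.2 s h1 hs
      exact (hT1 s (g μ) hsg).mpr this
  -- iterate g
  set a : ℕ → Fin n := fun t => g^[t] ⟨0, hn⟩ with ha
  have hstep : ∀ t, a (t + 1) = g (a t) := fun t => Function.iterate_succ_apply' g t _
  have key : ∀ d t : ℕ, E1 (a t) (a (t + d + 1)) ∧ E2 (a t) (a (t + d + 1)) := by
    intro d
    induction d with
    | zero =>
      intro t
      rw [hstep t]
      exact ⟨hE1 _, hE2 _⟩
    | succ d ih =>
      intro t
      have h2 : E2 (a t) (a (t + d + 1)) := (ih t).2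
      have h1' : E1 (a t) (a (t + d + 2)) := by
        have := hC (a (t + d + 1)) (a t) h2
        rwa [← hstep (t + d + 1)] at this
      have hts : t + (d + 1) + 1 = t + d + 2 := by ring
      rw [hts]
      refine ⟨h1', ?_⟩
      by_contra h2'
      have hne2 : a t ≠ a (t + d + 2) := fun e => hT1irr _ (e ▸ h1')
      have hrev : E2 (a (t + d + 2)) (a t) := (hT2 _ _ (Ne.symm hne2)).mpr h2'
      have hE1' : E1 (a (t + d + 2)) (a (t + 1)) := by
        have := hC (a t) (a (t + d + 2)) hrev
        rwa [← hstep t] at this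
      have hE1'' : E1 (a (t + 1)) (a (t + d + 2)) := by
        have := (ih (t + 1)).1
        rwa [show t + 1 + d + 1 = t + d + 2 by ring] at this
      have hne3 : a (t + 1) ≠ a (t + d + 2) := fun e => hT1irr _ (e ▸ hE1'')
      exact ((hT1 _ _ hne3).mp hE1'') hE1'
  -- a is injective, contradiction with finiteness
  have hinj : Function.Injective a := by
    intro s t hst
    by_contra hne'
    rcases lt_or_gt_of_ne hne' with hlt | hlt
    · obtain ⟨d, hd⟩ : ∃ d, t = s + d + 1 := ⟨t - s - 1, by omega⟩
      have := (key d s).1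
      rw [← hd, hst] at this
      exact hT1irr _ this
    · obtain ⟨d, hd⟩ : ∃ d, s = t + d + 1 := ⟨s - t - 1, by omega⟩
      have := (key d t).1
      rw [← hd, hst] at this
      exact hT1irr _ this
  obtain ⟨x, y, hxy, he⟩ := Finite.exists_ne_map_eq_of_infinite a
  exact hxy (hinj he)
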